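/- Let q ≥ 2 and H(z) a Laurent polynomial vector, and suppose m(z) is a Laurent polynomial with |m(z)|² = 2 − H*(z)H(z) for all z ∈ 𝕋ⁿ. Then the matrix [m(z)H(z), I − H(z)H*(z)] is paraunitary, i.e., [m(z)H(z), I − H(z)H*(z)] · [m(z)H(z), I − H(z)H*(z)]* = I for all z ∈ 𝕋ⁿ. -/

import Mathlib

open Matrix Complex

/-- The scaled LP² matrix `[m H, I − H H*]` built from the values `h = H(z)`
and `m = m(z)` at a point `z ∈ 𝕋ⁿ` (on the torus conjugation implements
the substitution `z ↦ z⁻¹` for real-coefficient Laurent polynomials). -/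
noncomputable def ScaledPhi {q : ℕ} (m : ℂ) (h : Fin q → ℂ) :
    Matrix (Fin q) (Fin (q + 1)) ℂ :=
  Matrix.of fun i j =>
    if hj : j = 0 then m * h i
    else (if i = j.pred hj then (1 : ℂ) else 0) - h i * (starRingEnd ℂ) (h (j.pred hj))

/-- if `|m(z)|² = 2 − H*(z)H(z)` on `𝕋ⁿ`, then the matrix
`[m(z)H(z), I − H(z)H*(z)]` is paraunitary:
`[mH, I − HH*] ⋅ [mH, I − HH*]* = I`. -/
theorem scaled_lp2_paraunitary (q : ℕ) (hq : 2 ≤ q) (h : Fin q → ℂ) (m : ℂ)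
    (hm : m * (starRingEnd ℂ) m = 2 - ∑ j, h j * (starRingEnd ℂ) (h j)) :
    ScaledPhi m h * (ScaledPhi m h)ᴴ = 1 := by
  ext i k
  simp only [Matrix.mul_apply, Matrix.conjTranspose_apply, ScaledPhi, Matrix.of_apply,
    Matrix.one_apply]
  rw [Fin.sum_univ_succ]
  simp only [Complex.star_def, dif_pos rfl, Fin.succ_ne_zero, dif_neg, not_false_iff,
    Fin.pred_succ, _root_.map_sub, _root_.map_mul, Complex.conj_conj, _root_.map_one,
    _root_.map_zero, MonoidWithZeroHom.map_ite_one_zero, eq_self_iff_true, dite_true]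
  have key : ∀ j' : Fin q,
      ((if i = j' then (1:ℂ) else 0) - h i * (starRingEnd ℂ) (h j')) *
        ((if k = j' then (1:ℂ) else 0) - (starRingEnd ℂ) (h k) * h j') =
      ((if i = j' then (if k = j' then (1:ℂ) else 0) else 0)
        - (if i = j' then (starRingEnd ℂ) (h k) * h j' else 0))
        - (if k = j' then h i * (starRingEnd ℂ) (h j') else 0)
        + h i * (starRingEnd ℂ) (h k) * (h j' * (starRingEnd ℂ) (h j')) := by
    intro j'; split_ifs <;> ring
  rw [Finset.sum_congr rfl fun j' _ => key j']
  simp only [Finset.sum_add_distrib, Finset.sum_sub_distrib, Finset.sum_ite_eq,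
    Finset.mem_univ, if_true, ← Finset.mul_sum]
  split_ifs with h1 h2 h2
  · subst h1; linear_combination h k * (starRingEnd ℂ) (h k) * hm
  · exact absurd h1.symm h2
  · exact absurd h2.symm h1
  · linear_combination h i * (starRingEnd ℂ) (h k) * hm
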